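/- (Matrix Gronwall / fundamental matrix bound.) Let Ψ be the principal fundamental matrix at 0 of dΨ(s) = A(s)Ψ(s)ds, Ψ(0) = I, where A = A₁ + A₂ is continuous on [0,T), A₂ is bounded by C₂, and A₁ satisfies y'A₁(s)y ≤ ((1-ε₀)/(T-s) + C₁)‖y‖² for some ε₀ ∈ (0,1/2) and C₁ > 0, for all s ∈ [0,T) and y ∈ ℝ^d. Then ‖Ψ(t)Ψ(s)⁻¹‖ ≤ e^{T(C₁+C₂)}((T-s)/(T-t))^{1-ε₀} for all 0 ≤ s ≤ t < T. -/

import Mathlib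

open Matrix Real

attribute [local instance] Matrix.normedAddCommGroup Matrix.normedSpace

/-- Euclidean norm of a vector in `ℝ^d`. -/
noncomputable def enorm13 {d : ℕ} (y : Fin d → ℝ) : ℝ := Real.sqrt (y ⬝ᵥ y)

lemma dot13_nonneg {d : ℕ} (v : Fin d → ℝ) : 0 ≤ v ⬝ᵥ v :=
  Finset.sum_nonneg fun i _ => mul_self_nonneg _

lemma enorm13_mul_self {d : ℕ} (v : Fin d → ℝ) : enorm13 v * enorm13 v = v ⬝ᵥ v :=
  Real.mul_self_sqrt (dot13_nonneg v)

lemma cs13 {d : ℕ} (v w : Fin d → ℝ) : v ⬝ᵥ w ≤ enorm13 v * enorm13 w := by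
  set E := (EuclideanSpace.equiv (Fin d) ℝ).symm with hE
  have h := real_inner_le_norm (E v) (E w)
  have h1 : (inner ℝ (E v) (E w) : ℝ) = v ⬝ᵥ w := by
    simp [PiLp.inner_apply, RCLike.inner_apply, dotProduct, hE]
    exact Finset.sum_congr rfl fun i _ => mul_comm _ _
  have h2 : ∀ u : Fin d → ℝ, ‖E u‖ = enorm13 u := by
    intro u
    rw [EuclideanSpace.norm_eq]
    simp only [enorm13, dotProduct]
    congr 1
    refine Finset.sum_congr rfl fun i _ => ?_
    simp [hE, sq, Real.norm_eq_abs, abs_mul_abs_self]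
  rw [h1, h2, h2] at h
  exact h

/-- derivative of the dot-square along two `HasDerivAt` curves -/
lemma euc13_apply {d : ℕ} (x : Fin d → ℝ) (i : Fin d) :
    ((EuclideanSpace.equiv (Fin d) ℝ).symm x) i = x i := rfl

lemma hasDerivAt_dot13 {d : ℕ} {Z : ℝ → Fin d → ℝ} {Z' : Fin d → ℝ} {u : ℝ}
    (hZ : HasDerivAt Z Z' u) :
    HasDerivAt (fun v => Z v ⬝ᵥ Z v) (2 * (Z u ⬝ᵥ Z')) u := by
  have hW : HasDerivAt (fun v => (EuclideanSpace.equiv (Fin d) ℝ).symm (Z v))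
      ((EuclideanSpace.equiv (Fin d) ℝ).symm Z') u :=
    ((EuclideanSpace.equiv (Fin d) ℝ).symm.hasFDerivAt).comp_hasDerivAt u hZ
  have h := HasDerivAt.inner ℝ hW hW
  have h1 : (fun v => (inner ℝ ((EuclideanSpace.equiv (Fin d) ℝ).symm (Z v))
      ((EuclideanSpace.equiv (Fin d) ℝ).symm (Z v)) : ℝ)) = fun v => Z v ⬝ᵥ Z v := by
    funext v
    simp only [PiLp.inner_apply, RCLike.inner_apply, starRingEnd_apply, star_trivial,
      euc13_apply, dotProduct]
  have h2 : (inner ℝ ((EuclideanSpace.equiv (Fin d) ℝ).symm (Z u))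
        ((EuclideanSpace.equiv (Fin d) ℝ).symm Z') : ℝ)
      + (inner ℝ ((EuclideanSpace.equiv (Fin d) ℝ).symm Z')
        ((EuclideanSpace.equiv (Fin d) ℝ).symm (Z u)) : ℝ)
      = 2 * (Z u ⬝ᵥ Z') := by
    simp only [PiLp.inner_apply, RCLike.inner_apply, starRingEnd_apply, star_trivial,
      euc13_apply, dotProduct, two_mul, Finset.mul_sum, ← Finset.sum_add_distrib]
    refine Finset.sum_congr rfl fun i _ => by ring
  rw [h1, h2] at h
  exact h

/-- Lemma 6.4: fundamental matrix bound. If `Ψ' = (A₁+A₂)Ψ`, `Ψ(0) = I`,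
`y'A₁(s)y ≤ ((1-ε₀)/(T-s) + C₁)‖y‖²` and `‖A₂(s)‖ ≤ C₂`, then
`‖Ψ(t)Ψ(s)⁻¹‖ ≤ e^{T(C₁+C₂)}((T-s)/(T-t))^{1-ε₀}` for `0 ≤ s ≤ t < T`. -/
theorem stmt_13 {d : ℕ} (T : ℝ) (hT : 0 < T) (ε₀ C₁ C₂ : ℝ)
    (hε₀ : ε₀ ∈ Set.Ioo (0 : ℝ) (1 / 2)) (hC₁ : 0 < C₁) (hC₂ : 0 ≤ C₂)
    (A₁ A₂ : ℝ → Matrix (Fin d) (Fin d) ℝ)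
    (hA₁c : ContinuousOn A₁ (Set.Ico 0 T)) (hA₂c : ContinuousOn A₂ (Set.Ico 0 T))
    (hA₁ : ∀ s ∈ Set.Ico (0 : ℝ) T, ∀ y : Fin d → ℝ,
      y ⬝ᵥ (A₁ s *ᵥ y) ≤ ((1 - ε₀) / (T - s) + C₁) * (y ⬝ᵥ y))
    (hA₂ : ∀ s ∈ Set.Ico (0 : ℝ) T, ∀ y : Fin d → ℝ,
      enorm13 (A₂ s *ᵥ y) ≤ C₂ * enorm13 y)
    (Ψ : ℝ → Matrix (Fin d) (Fin d) ℝ) (hΨ0 : Ψ 0 = 1)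
    (hΨ : ∀ s ∈ Set.Ico (0 : ℝ) T, HasDerivAt Ψ ((A₁ s + A₂ s) * Ψ s) s)
    (hΨinv : ∀ s ∈ Set.Ico (0 : ℝ) T, IsUnit (Ψ s)) :
    ∀ s t : ℝ, 0 ≤ s → s ≤ t → t < T → ∀ y : Fin d → ℝ,
      enorm13 ((Ψ t * (Ψ s)⁻¹) *ᵥ y)
        ≤ Real.exp (T * (C₁ + C₂)) * ((T - s) / (T - t)) ^ (1 - ε₀) * enorm13 y := by
  obtain ⟨hε0, hεh⟩ := hε₀
  intro s t hs hst htT y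
  have hsT : s < T := lt_of_le_of_lt hst htT
  have hsI : s ∈ Set.Ico (0 : ℝ) T := ⟨hs, hsT⟩
  set C : ℝ := C₁ + C₂ with hCdef
  have hC : 0 < C := add_pos_of_pos_of_nonneg hC₁ hC₂
  set α : ℝ := 2 * (1 - ε₀) with hαdef
  have hα1 : 1 ≤ α := by rw [hαdef]; linarith
  have hα0 : 0 < α := by linarith
  -- the curve Z
  set w : Fin d → ℝ := (Ψ s)⁻¹ *ᵥ y with hwdef
  set Z : ℝ → Fin d → ℝ := fun u => Ψ u *ᵥ w with hZdef
  have hZs : Z s = y := by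
    show Ψ s *ᵥ ((Ψ s)⁻¹ *ᵥ y) = y
    rw [Matrix.mulVec_mulVec,
      Matrix.mul_nonsing_inv _ ((Matrix.isUnit_iff_isUnit_det _).1 (hΨinv s hsI)),
      Matrix.one_mulVec]
  have hgoalZ : (Ψ t * (Ψ s)⁻¹) *ᵥ y = Z t := by
    rw [hZdef]; simp [hwdef, Matrix.mulVec_mulVec]
  -- derivative of Z
  let L : Matrix (Fin d) (Fin d) ℝ →L[ℝ] (Fin d → ℝ) :=
    LinearMap.toContinuousLinearMap
      { toFun := fun M => M *ᵥ w
        map_add' := fun M N => Matrix.add_mulVec M N w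
        map_smul' := fun c M => Matrix.smul_mulVec c M w }
  have hZd : ∀ u ∈ Set.Ico (0 : ℝ) T, HasDerivAt Z ((A₁ u + A₂ u) *ᵥ Z u) u := by
    intro u hu
    have h := L.hasFDerivAt.comp_hasDerivAt u (hΨ u hu)
    have hL : ∀ M : Matrix (Fin d) (Fin d) ℝ, L M = M *ᵥ w := fun M => by
      simp [L]
    have hfun : (⇑L ∘ Ψ) = Z := by funext v; simp [Function.comp, hL, hZdef]
    rw [hfun] at h
    exact h.congr_deriv ((hL _).trans (Matrix.mulVec_mulVec _ _ _).symm)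
  -- f and its derivative
  set f : ℝ → ℝ := fun u => Z u ⬝ᵥ Z u with hfdef
  have hfd : ∀ u ∈ Set.Ico (0 : ℝ) T,
      HasDerivAt f (2 * (Z u ⬝ᵥ ((A₁ u + A₂ u) *ᵥ Z u))) u :=
    fun u hu => hasDerivAt_dot13 (hZd u hu)
  have hfnn : ∀ u, 0 ≤ f u := fun u => dot13_nonneg _
  -- the weight and its derivative
  set W : ℝ → ℝ := fun u => (T - u) ^ α * Real.exp (-(2 * C) * u) with hWdef
  set W' : ℝ → ℝ := fun u =>
    (α * (T - u) ^ (α - 1) * (-1)) * Real.exp (-(2 * C) * u)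
      + (T - u) ^ α * (Real.exp (-(2 * C) * u) * (-(2 * C))) with hW'def
  have hWd : ∀ u : ℝ, HasDerivAt W (W' u) u := by
    intro u
    have h1 : HasDerivAt (fun v : ℝ => T - v) (-1) u := by
      simpa using (hasDerivAt_id u).const_sub T
    have h2 : HasDerivAt (fun v : ℝ => (T - v) ^ α)
        (α * (T - u) ^ (α - 1) * (-1)) u :=
      (Real.hasDerivAt_rpow_const (Or.inr hα1)).comp u h1
    have h3 : HasDerivAt (fun v : ℝ => -(2 * C) * v) (-(2 * C)) u := by
      simpa using (hasDerivAt_id u).const_mul (-(2 * C))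
    have h4 : HasDerivAt (fun v : ℝ => Real.exp (-(2 * C) * v))
        (Real.exp (-(2 * C) * u) * (-(2 * C))) u :=
      (Real.hasDerivAt_exp _).comp u h3
    exact h2.mul h4
  -- g and its derivative
  set g : ℝ → ℝ := fun u => f u * W u with hgdef
  have hgd : ∀ u ∈ Set.Ico (0 : ℝ) T,
      HasDerivAt g (2 * (Z u ⬝ᵥ ((A₁ u + A₂ u) *ᵥ Z u)) * W u + f u * W' u) u :=
    fun u hu => (hfd u hu).mul (hWd u)
  -- g is antitone on [s,t]
  have hsub : Set.Icc s t ⊆ Set.Ico (0 : ℝ) T := fun u hu =>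
    ⟨le_trans hs hu.1, lt_of_le_of_lt hu.2 htT⟩
  have hanti : AntitoneOn g (Set.Icc s t) := by
    apply antitoneOn_of_deriv_nonpos (convex_Icc s t)
    · exact fun u hu => ((hgd u (hsub hu)).continuousAt).continuousWithinAt
    · rw [interior_Icc]
      exact fun u hu =>
        ((hgd u (hsub (Set.Ioo_subset_Icc_self hu))).differentiableAt).differentiableWithinAt
    · rw [interior_Icc]
      intro u hu
      have huI : u ∈ Set.Ico (0 : ℝ) T := hsub (Set.Ioo_subset_Icc_self hu)
      rw [(hgd u huI).deriv]
      have hTu : 0 < T - u := by linarith [huI.2]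
      -- bound on the derivative of f
      have hb1 : Z u ⬝ᵥ (A₁ u *ᵥ Z u) ≤ ((1 - ε₀) / (T - u) + C₁) * f u :=
        hA₁ u huI (Z u)
      have hb2 : Z u ⬝ᵥ (A₂ u *ᵥ Z u) ≤ C₂ * f u := by
        calc Z u ⬝ᵥ (A₂ u *ᵥ Z u) ≤ enorm13 (Z u) * enorm13 (A₂ u *ᵥ Z u) :=
              cs13 _ _
          _ ≤ enorm13 (Z u) * (C₂ * enorm13 (Z u)) := by
              apply mul_le_mul_of_nonneg_left (hA₂ u huI (Z u)) (Real.sqrt_nonneg _)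
          _ = C₂ * f u := by
              show _ = C₂ * (Z u ⬝ᵥ Z u)
              rw [← enorm13_mul_self (Z u)]; ring
      have hbsum : 2 * (Z u ⬝ᵥ ((A₁ u + A₂ u) *ᵥ Z u))
          ≤ (α / (T - u) + 2 * C) * f u := by
        rw [Matrix.add_mulVec, dotProduct_add]
        have : (α / (T - u) + 2 * C) * f u
            = 2 * (((1 - ε₀) / (T - u) + C₁) * f u + C₂ * f u) := by
          rw [hαdef, hCdef]; ring
        rw [this]
        linarith
      have hWpos : 0 < W u := by
        rw [hWdef]
        exact mul_pos (Real.rpow_pos_of_pos hTu α) (Real.exp_pos _)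
      have hkey : (α / (T - u) + 2 * C) * f u * W u + f u * W' u = 0 := by
        have hpow : (T - u) ^ (α - 1) = (T - u) ^ α / (T - u) :=
          Real.rpow_sub_one hTu.ne' α
        show (α / (T - u) + 2 * C) * (Z u ⬝ᵥ Z u) * ((T - u) ^ α * Real.exp (-(2 * C) * u))
            + (Z u ⬝ᵥ Z u) * ((α * (T - u) ^ (α - 1) * (-1)) * Real.exp (-(2 * C) * u)
              + (T - u) ^ α * (Real.exp (-(2 * C) * u) * (-(2 * C)))) = 0
        rw [hpow]
        field_simp
        ring
      have hstep : 2 * (Z u ⬝ᵥ ((A₁ u + A₂ u) *ᵥ Z u)) * W u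
          ≤ (α / (T - u) + 2 * C) * f u * W u :=
        mul_le_mul_of_nonneg_right hbsum hWpos.le
      have hfin := add_le_add_left hstep (f u * W' u)
      rw [hkey] at hfin
      exact hfin
  have hgle : g t ≤ g s :=
    hanti (Set.left_mem_Icc.2 hst) (Set.right_mem_Icc.2 hst) hst
  -- unfold the conclusion of the monotonicity
  have hTt : 0 < T - t := by linarith
  have hTs : 0 < T - s := by linarith
  have hden : 0 < (T - t) ^ α * Real.exp (-(2 * C) * t) :=
    mul_pos (Real.rpow_pos_of_pos hTt α) (Real.exp_pos _)
  have h1 : f t ≤ (y ⬝ᵥ y) * (((T - s) / (T - t)) ^ α * Real.exp (2 * C * (t - s))) := by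
    have h2 : f t ≤ f s * ((T - s) ^ α * Real.exp (-(2 * C) * s))
        / ((T - t) ^ α * Real.exp (-(2 * C) * t)) := by
      rw [le_div_iff₀ hden]
      exact hgle
    have h3 : f s * ((T - s) ^ α * Real.exp (-(2 * C) * s))
        / ((T - t) ^ α * Real.exp (-(2 * C) * t))
        = (y ⬝ᵥ y) * (((T - s) / (T - t)) ^ α * Real.exp (2 * C * (t - s))) := by
      have hfs : f s = y ⬝ᵥ y := by show Z s ⬝ᵥ Z s = y ⬝ᵥ y; rw [hZs]
      rw [hfs, mul_div_assoc, mul_div_mul_comm, Real.div_rpow hTs.le hTt.le,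
        ← Real.exp_sub]
      congr 2
      ring
    rw [h3] at h2
    exact h2
  -- take square roots
  have hratio : 0 ≤ (T - s) / (T - t) := div_nonneg hTs.le hTt.le
  have hsq1 : ((T - s) / (T - t)) ^ α = (((T - s) / (T - t)) ^ (1 - ε₀)) ^ 2 := by
    rw [← Real.rpow_natCast (((T - s) / (T - t)) ^ (1 - ε₀)) 2,
      ← Real.rpow_mul hratio]
    congr 1
    push_cast
    rw [hαdef]; ring
  have hsq2 : Real.exp (2 * C * (t - s)) = (Real.exp (C * (t - s))) ^ 2 := by
    rw [← Real.exp_nat_mul]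
    congr 1
    push_cast
    ring
  have hmain : enorm13 (Z t)
      ≤ enorm13 y * (((T - s) / (T - t)) ^ (1 - ε₀) * Real.exp (C * (t - s))) := by
    have : enorm13 (Z t) = Real.sqrt (f t) := rfl
    rw [this]
    calc Real.sqrt (f t)
        ≤ Real.sqrt ((y ⬝ᵥ y) * (((T - s) / (T - t)) ^ α * Real.exp (2 * C * (t - s)))) :=
          Real.sqrt_le_sqrt h1
      _ = enorm13 y * (((T - s) / (T - t)) ^ (1 - ε₀) * Real.exp (C * (t - s))) := by
          rw [Real.sqrt_mul (dot13_nonneg y), Real.sqrt_mul (Real.rpow_nonneg hratio _),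
            hsq1, hsq2, Real.sqrt_sq (Real.rpow_nonneg hratio _),
            Real.sqrt_sq (Real.exp_pos _).le]
          rfl
  rw [hgoalZ]
  have hexp : Real.exp (C * (t - s)) ≤ Real.exp (T * C) := by
    apply Real.exp_le_exp.2
    have hts : t - s ≤ T := by linarith
    calc C * (t - s) ≤ C * T := mul_le_mul_of_nonneg_left hts hC.le
      _ = T * C := mul_comm _ _
  have hbnn : 0 ≤ enorm13 y := Real.sqrt_nonneg _
  have hrnn : 0 ≤ ((T - s) / (T - t)) ^ (1 - ε₀) := Real.rpow_nonneg hratio _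
  calc enorm13 (Z t)
      ≤ enorm13 y * (((T - s) / (T - t)) ^ (1 - ε₀) * Real.exp (C * (t - s))) := hmain
    _ ≤ enorm13 y * (((T - s) / (T - t)) ^ (1 - ε₀) * Real.exp (T * C)) := by
        apply mul_le_mul_of_nonneg_left _ hbnn
        exact mul_le_mul_of_nonneg_left hexp hrnn
    _ = Real.exp (T * (C₁ + C₂)) * ((T - s) / (T - t)) ^ (1 - ε₀) * enorm13 y := by
        rw [hCdef]; ring
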